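/- The diagram 𝒟 is path-connected: for any two points Q₀, Q₁ ∈ 𝒟 there exists a continuous map γ : [0,1] → ℝ² with γ(0) = Q₀, γ(1) = Q₁, and γ(t) ∈ 𝒟 for all t ∈ [0,1]. -/

import Mathlib

open MeasureTheory Metric Set Filter

noncomputable section

abbrev E2 := EuclideanSpace ℝ (Fin 2)

/-- Area: two-dimensional Lebesgue measure. -/
def area (Ω : Set E2) : ℝ := (volume Ω).toReal

/-- Perimeter: one-dimensional Hausdorff measure of the topological boundary. -/
def perim (Ω : Set E2) : ℝ := (μH[1] (frontier Ω)).toReal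

/-- Moment of inertia about the origin. -/
def inertia (Ω : Set E2) : ℝ := ∫ p in Ω, ‖p‖ ^ 2

/-- The class 𝒜: nonempty bounded open convex subsets of ℝ², symmetric w.r.t. both axes. -/
def memA (Ω : Set E2) : Prop :=
  Ω.Nonempty ∧ IsOpen Ω ∧ Bornology.IsBounded Ω ∧ Convex ℝ Ω ∧
    (∀ p : E2, p ∈ Ω ↔ (!₂[-(p 0), p 1] : E2) ∈ Ω) ∧
    (∀ p : E2, p ∈ Ω ↔ (!₂[p 0, -(p 1)] : E2) ∈ Ω)

def xF (Ω : Set E2) : ℝ := (area Ω) ^ 2 / (2 * Real.pi * inertia Ω)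

def yF (Ω : Set E2) : ℝ := 4 * Real.pi * area Ω / (perim Ω) ^ 2

def diag : Set (ℝ × ℝ) := {q | ∃ Ω : Set E2, memA Ω ∧ q = (xF Ω, yF Ω)}

def Lplus (x : ℝ) : ℝ := sSup {y | ∃ Ω : Set E2, memA Ω ∧ xF Ω = x ∧ yF Ω = y}

def Lminus (x : ℝ) : ℝ := sInf {y | ∃ Ω : Set E2, memA Ω ∧ xF Ω = x ∧ yF Ω = y}

def rhombus (a b : ℝ) : Set E2 :=
  interior (convexHull ℝ {(!₂[a, 0] : E2), !₂[-a, 0], !₂[0, b], !₂[0, -b]})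

open scoped Pointwise RealInnerProductSpace NNReal

lemma exists_proj_map {K : Set E2} (hK : Convex ℝ K) (hKc : IsClosed K) (hne : K.Nonempty) :
    ∃ f : E2 → E2, LipschitzWith 1 f ∧ (∀ q, f q ∈ K) ∧
      ∀ q, ∀ w ∈ K, ⟪q - f q, w - f q⟫ ≤ 0 := by
  have h1 : ∀ q : E2, ∃ v, v ∈ K ∧ ∀ w ∈ K, ⟪q - v, w - v⟫ ≤ 0 := by
    intro q
    obtain ⟨v, hvK, hv⟩ := exists_norm_eq_iInf_of_complete_convex hne hKc.isComplete hK q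
    exact ⟨v, hvK, (norm_eq_iInf_iff_real_inner_le_zero hK hvK).1 hv⟩
  choose f hfK hf using h1
  refine ⟨f, ?_, hfK, hf⟩
  apply LipschitzWith.of_dist_le_mul
  intro u v
  rcases eq_or_ne (f u) (f v) with h | h
  · simp only [dist_eq_norm, h, sub_self, norm_zero, NNReal.coe_one, one_mul]
    exact norm_nonneg _
  have h1 : ⟪u - f u, f v - f u⟫ ≤ 0 := hf u _ (hfK v)
  have h2 : ⟪v - f v, f u - f v⟫ ≤ 0 := hf v _ (hfK u)
  have h1' : 0 ≤ ⟪u - f u, f u - f v⟫ := by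
    rw [show f v - f u = -(f u - f v) by abel, inner_neg_right] at h1; linarith
  have key : ‖f u - f v‖ ^ 2 ≤ ⟪u - v, f u - f v⟫ := by
    have expand : ⟪u - v, f u - f v⟫
        = ⟪u - f u, f u - f v⟫ - ⟪v - f v, f u - f v⟫ + ‖f u - f v‖ ^ 2 := by
      rw [← real_inner_self_eq_norm_sq,
        show u - v = (u - f u) - (v - f v) + (f u - f v) by abel,
        inner_add_left, inner_sub_left]
    linarith
  have hcs : ⟪u - v, f u - f v⟫ ≤ ‖u - v‖ * ‖f u - f v‖ := real_inner_le_norm _ _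
  have hpos : 0 < ‖f u - f v‖ := by
    rw [norm_pos_iff]; exact sub_ne_zero.2 h
  have : ‖f u - f v‖ ≤ ‖u - v‖ := by nlinarith
  calc dist (f u) (f v) = ‖f u - f v‖ := dist_eq_norm _ _
    _ ≤ ‖u - v‖ := this
    _ = ↑(1 : ℝ≥0) * dist u v := by rw [dist_eq_norm]; norm_num


lemma frontier_hausdorff_mono {A B : Set E2} (hA : Convex ℝ A) (hAo : IsOpen A)
    (hAne : A.Nonempty) (hBo : IsOpen B) (hBb : Bornology.IsBounded B)
    (hAB : A ⊆ B) : μH[1] (frontier A) ≤ μH[1] (frontier B) := by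
  obtain ⟨f, hlip, hfK, hvar⟩ := exists_proj_map hA.closure isClosed_closure
    (hAne.mono subset_closure)
  have uniq : ∀ q v, v ∈ closure A → (∀ w ∈ closure A, ⟪q - v, w - v⟫ ≤ 0) → f q = v := by
    intro q v hv hvar'
    have h1 : ⟪q - f q, v - f q⟫ ≤ 0 := hvar q v hv
    have h2 : ⟪q - v, f q - v⟫ ≤ 0 := hvar' (f q) (hfK q)
    have h2' : 0 ≤ ⟪q - v, v - f q⟫ := by
      rw [show (f q - v : E2) = -(v - f q) by abel, inner_neg_right] at h2; linarith
    have hdd : ⟪v - f q, v - f q⟫ ≤ (0:ℝ) := by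
      calc ⟪v - f q, v - f q⟫ = ⟪(q - f q) - (q - v), v - f q⟫ := by
            rw [show ((q - f q) - (q - v) : E2) = v - f q by abel]
        _ = ⟪q - f q, v - f q⟫ - ⟪q - v, v - f q⟫ := inner_sub_left _ _ _
        _ ≤ 0 := by linarith
    have hz : (v - f q : E2) = 0 := by
      rw [← inner_self_eq_zero (𝕜 := ℝ)]
      exact le_antisymm hdd real_inner_self_nonneg
    rw [eq_comm, ← sub_eq_zero]
    exact hz
  have hsurj : frontier A ⊆ f '' frontier B := by
    intro p hp
    have hpA : p ∉ A := by
      rw [hAo.frontier_eq] at hp; exact hp.2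
    have hpcA : p ∈ closure A := hp.1
    have hpcB : p ∈ closure B := (closure_mono hAB) hpcA
    by_cases hpB : p ∈ B
    · obtain ⟨φ, hφ⟩ := geometric_hahn_banach_open_point hA hAo hpA
      set v : E2 := (InnerProductSpace.toDual ℝ E2).symm φ with hv
      have hinner : ∀ y : E2, ⟪v, y⟫ = φ y := fun y => InnerProductSpace.toDual_symm_apply
      have hvne : v ≠ 0 := by
        obtain ⟨a₀, ha₀⟩ := hAne
        intro h0
        have hlt := hφ a₀ ha₀
        rw [← hinner a₀, ← hinner p, h0] at hlt
        simp at hlt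
      have hvnorm : (0:ℝ) < ‖v‖ := norm_pos_iff.2 hvne
      have hφle : ∀ w ∈ closure A, φ w ≤ φ p := by
        intro w hw
        have hsub : closure A ⊆ {y : E2 | φ y ≤ φ p} :=
          closure_minimal (fun a ha => (hφ a ha).le)
            (isClosed_le φ.continuous continuous_const)
        exact hsub hw
      obtain ⟨M, hM⟩ := hBb.closure.subset_closedBall (0 : E2)
      have hT0 : (0:ℝ) ∈ {t : ℝ | 0 ≤ t ∧ p + t • v ∈ closure B} :=
        ⟨le_refl _, by rw [zero_smul, add_zero]; exact subset_closure hpB⟩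
      have hTbdd : BddAbove {t : ℝ | 0 ≤ t ∧ p + t • v ∈ closure B} := by
        refine ⟨(‖p‖ + M) / ‖v‖, fun t ht => ?_⟩
        have h1 : ‖p + t • v‖ ≤ M := by
          have := hM ht.2; rwa [mem_closedBall, dist_zero_right] at this
        have h2 : ‖t • v‖ = t * ‖v‖ := by
          rw [norm_smul, Real.norm_eq_abs, abs_of_nonneg ht.1]
        have h3 : ‖t • v‖ ≤ ‖p‖ + M := by
          calc ‖t • v‖ = ‖(p + t • v) - p‖ := by rw [add_sub_cancel_left]
            _ ≤ ‖p + t • v‖ + ‖p‖ := norm_sub_le _ _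
            _ ≤ ‖p‖ + M := by linarith
        rw [le_div_iff₀ hvnorm]
        linarith
      have hTclosed : IsClosed {t : ℝ | 0 ≤ t ∧ p + t • v ∈ closure B} := by
        have heq : {t : ℝ | 0 ≤ t ∧ p + t • v ∈ closure B}
            = Ici (0:ℝ) ∩ (fun t : ℝ => p + t • v) ⁻¹' closure B := rfl
        rw [heq]
        exact isClosed_Ici.inter (IsClosed.preimage
          (by fun_prop) isClosed_closure)
      set t₀ := sSup {t : ℝ | 0 ≤ t ∧ p + t • v ∈ closure B} with ht₀
      have ht₀T : t₀ ∈ {t : ℝ | 0 ≤ t ∧ p + t • v ∈ closure B} :=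
        hTclosed.csSup_mem ⟨0, hT0⟩ hTbdd
      set q : E2 := p + t₀ • v with hq
      have hqB : q ∉ B := by
        intro hqB
        obtain ⟨ε, hε, hball⟩ := Metric.isOpen_iff.1 hBo q hqB
        set δ := ε / (2 * ‖v‖) with hδdef
        have hδ : (0:ℝ) < δ := by positivity
        have hmem : t₀ + δ ∈ {t : ℝ | 0 ≤ t ∧ p + t • v ∈ closure B} := by
          refine ⟨by linarith [ht₀T.1], subset_closure (hball ?_)⟩
          rw [mem_ball]
          have hmove : p + (t₀ + δ) • v = q + δ • v := by
            rw [hq, add_smul]; abel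
          rw [hmove, dist_eq_norm, add_sub_cancel_left, norm_smul,
            Real.norm_eq_abs, abs_of_pos hδ, hδdef]
          rw [div_mul_eq_mul_div, mul_comm 2 ‖v‖, ← div_div,
            mul_div_assoc, div_self hvnorm.ne']
          linarith
        have := le_csSup hTbdd hmem
        linarith
      have hqfB : q ∈ frontier B := by
        rw [hBo.frontier_eq]
        exact ⟨ht₀T.2, hqB⟩
      refine ⟨q, hqfB, uniq q p hpcA ?_⟩
      intro w hw
      have hqp : (q - p : E2) = t₀ • v := by rw [hq, add_sub_cancel_left]
      rw [hqp, real_inner_smul_left, hinner, map_sub]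
      have := hφle w hw
      nlinarith [ht₀T.1]
    · have hpfB : p ∈ frontier B := by rw [hBo.frontier_eq]; exact ⟨hpcB, hpB⟩
      exact ⟨p, hpfB, uniq p p hpcA (fun w hw => by simp)⟩
  calc μH[1] (frontier A) ≤ μH[1] (f '' frontier B) := measure_mono hsurj
    _ ≤ (1:ℝ≥0) ^ (1:ℝ) * μH[1] (frontier B) := hlip.hausdorffMeasure_image_le zero_le_one _
    _ = μH[1] (frontier B) := by simp

lemma memA_zero_mem {Ω : Set E2} (h : memA Ω) : (0 : E2) ∈ Ω := by
  obtain ⟨⟨p, hp⟩, _, _, hconv, hsym1, hsym2⟩ := h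
  have hp2 : (!₂[-(p 0), p 1] : E2) ∈ Ω := (hsym1 p).1 hp
  have hp3 : (!₂[(!₂[-(p 0), p 1] : E2) 0, -((!₂[-(p 0), p 1] : E2) 1)] : E2) ∈ Ω :=
    (hsym2 _).1 hp2
  have hneg : (!₂[(!₂[-(p 0), p 1] : E2) 0, -((!₂[-(p 0), p 1] : E2) 1)] : E2) = -p := by
    ext i
    fin_cases i <;> simp
  rw [hneg] at hp3
  have := hconv hp hp3 (by norm_num : (0:ℝ) ≤ 1/2) (by norm_num : (0:ℝ) ≤ 1/2) (by norm_num)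
  simpa using this

structure Good (Ω₀ Ω₁ : Set E2) (r R : ℝ) : Prop where
  m₀ : memA Ω₀
  m₁ : memA Ω₁
  hr : 0 < r
  hrR : r ≤ R
  hb₀ : ball (0:E2) r ⊆ Ω₀
  hb₁ : ball (0:E2) r ⊆ Ω₁
  hR₀ : Ω₀ ⊆ ball (0:E2) R
  hR₁ : Ω₁ ⊆ ball (0:E2) R

lemma good_exists {Ω₀ Ω₁ : Set E2} (h₀ : memA Ω₀) (h₁ : memA Ω₁) :
    ∃ r R : ℝ, Good Ω₀ Ω₁ r R := by
  obtain ⟨r₀, hr₀, hb₀⟩ := Metric.isOpen_iff.1 h₀.2.1 0 (memA_zero_mem h₀)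
  obtain ⟨r₁, hr₁, hb₁⟩ := Metric.isOpen_iff.1 h₁.2.1 0 (memA_zero_mem h₁)
  obtain ⟨R₀, hR₀⟩ := (h₀.2.2.1).subset_ball (0 : E2)
  obtain ⟨R₁, hR₁⟩ := (h₁.2.2.1).subset_ball (0 : E2)
  refine ⟨min r₀ r₁, max (max R₀ R₁) (min r₀ r₁), ?_⟩
  have hrm : 0 < min r₀ r₁ := lt_min hr₀ hr₁
  refine ⟨h₀, h₁, hrm, le_max_right _ _, ?_, ?_, ?_, ?_⟩
  · exact (ball_subset_ball (min_le_left _ _)).trans hb₀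
  · exact (ball_subset_ball (min_le_right _ _)).trans hb₁
  · exact hR₀.trans (ball_subset_ball ((le_max_left _ _).trans (le_max_left _ _)))
  · exact hR₁.trans (ball_subset_ball ((le_max_right _ _).trans (le_max_left _ _)))

namespace Good

variable {Ω₀ Ω₁ : Set E2} {r R : ℝ} (G : Good Ω₀ Ω₁ r R)
include G

lemma hR : 0 < R := G.hr.trans_le G.hrR

lemma abs₀ : Absorbent ℝ Ω₀ := (absorbent_ball_zero G.hr).mono G.hb₀
lemma abs₁ : Absorbent ℝ Ω₁ := (absorbent_ball_zero G.hr).mono G.hb₁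

lemma gauge_le₀ (p : E2) : gauge Ω₀ p ≤ ‖p‖ / r := by
  have := gauge_mono (absorbent_ball_zero G.hr) G.hb₀ p
  rwa [gauge_ball G.hr.le] at this

lemma gauge_le₁ (p : E2) : gauge Ω₁ p ≤ ‖p‖ / r := by
  have := gauge_mono (absorbent_ball_zero G.hr) G.hb₁ p
  rwa [gauge_ball G.hr.le] at this

lemma le_gauge₀ (p : E2) : ‖p‖ / R ≤ gauge Ω₀ p := by
  have := gauge_mono G.abs₀ G.hR₀ p
  rwa [gauge_ball G.hR.le] at this

lemma le_gauge₁ (p : E2) : ‖p‖ / R ≤ gauge Ω₁ p := by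
  have := gauge_mono G.abs₁ G.hR₁ p
  rwa [gauge_ball G.hR.le] at this

end Good

def gaugeMix (Ω₀ Ω₁ : Set E2) (t : ℝ) (p : E2) : ℝ :=
  (1 - t) * gauge Ω₀ p + t * gauge Ω₁ p

def mixSet (Ω₀ Ω₁ : Set E2) (t : ℝ) : Set E2 := {p | gaugeMix Ω₀ Ω₁ t p < 1}

namespace Good

variable {Ω₀ Ω₁ : Set E2} {r R : ℝ} (G : Good Ω₀ Ω₁ r R) {t s : ℝ}
include G

lemma gmix_nonneg (ht : t ∈ Icc (0:ℝ) 1) (p : E2) : 0 ≤ gaugeMix Ω₀ Ω₁ t p := by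
  have h0 := gauge_nonneg (s := Ω₀) (x := p)
  have h1 := gauge_nonneg (s := Ω₁) (x := p)
  have := ht.1; have := ht.2
  unfold gaugeMix; nlinarith

lemma gmix_le (ht : t ∈ Icc (0:ℝ) 1) (p : E2) : gaugeMix Ω₀ Ω₁ t p ≤ ‖p‖ / r := by
  have h0 := G.gauge_le₀ p
  have h1 := G.gauge_le₁ p
  have h2 := gauge_nonneg (s := Ω₀) (x := p)
  have h3 := gauge_nonneg (s := Ω₁) (x := p)
  have := ht.1; have := ht.2
  unfold gaugeMix; nlinarith

lemma le_gmix (ht : t ∈ Icc (0:ℝ) 1) (p : E2) : ‖p‖ / R ≤ gaugeMix Ω₀ Ω₁ t p := by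
  have h0 := G.le_gauge₀ p
  have h1 := G.le_gauge₁ p
  have := ht.1; have := ht.2
  have hn : 0 ≤ ‖p‖ / R := div_nonneg (norm_nonneg _) G.hR.le
  unfold gaugeMix; nlinarith

lemma gmix_smul (ht : t ∈ Icc (0:ℝ) 1) {c : ℝ} (hc : 0 ≤ c) (p : E2) :
    gaugeMix Ω₀ Ω₁ t (c • p) = c * gaugeMix Ω₀ Ω₁ t p := by
  unfold gaugeMix
  rw [gauge_smul_of_nonneg hc, gauge_smul_of_nonneg hc, smul_eq_mul, smul_eq_mul]
  ring

lemma gmix_add_le (ht : t ∈ Icc (0:ℝ) 1) (p q : E2) :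
    gaugeMix Ω₀ Ω₁ t (p + q) ≤ gaugeMix Ω₀ Ω₁ t p + gaugeMix Ω₀ Ω₁ t q := by
  have h0 := gauge_add_le G.m₀.2.2.2.1 G.abs₀ p q
  have h1 := gauge_add_le G.m₁.2.2.2.1 G.abs₁ p q
  have := ht.1
  have h2 : (0:ℝ) ≤ 1 - t := by linarith [ht.2]
  unfold gaugeMix
  nlinarith

end Good

lemma gauge_reflect₁ {Ω : Set E2} (hsym : ∀ p : E2, p ∈ Ω ↔ (!₂[-(p 0), p 1] : E2) ∈ Ω)
    (p : E2) : gauge Ω (!₂[-(p 0), p 1] : E2) = gauge Ω p := by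
  rw [gauge_def', gauge_def']
  congr 1
  ext c
  simp only [Set.mem_setOf_eq, Set.mem_Ioi]
  refine and_congr_right fun hc => ?_
  have key : (c⁻¹ • (!₂[-(p 0), p 1] : E2)) = (!₂[-((c⁻¹ • p) 0), (c⁻¹ • p) 1] : E2) := by
    ext i
    fin_cases i <;> simp [PiLp.smul_apply, smul_eq_mul] <;> ring
  rw [key, ← hsym (c⁻¹ • p)]

lemma gauge_reflect₂ {Ω : Set E2} (hsym : ∀ p : E2, p ∈ Ω ↔ (!₂[p 0, -(p 1)] : E2) ∈ Ω)
    (p : E2) : gauge Ω (!₂[p 0, -(p 1)] : E2) = gauge Ω p := by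
  rw [gauge_def', gauge_def']
  congr 1
  ext c
  simp only [Set.mem_setOf_eq, Set.mem_Ioi]
  refine and_congr_right fun hc => ?_
  have key : (c⁻¹ • (!₂[p 0, -(p 1)] : E2)) = (!₂[(c⁻¹ • p) 0, -((c⁻¹ • p) 1)] : E2) := by
    ext i
    fin_cases i <;> simp [PiLp.smul_apply, smul_eq_mul] <;> ring
  rw [key, ← hsym (c⁻¹ • p)]

namespace Good

variable {Ω₀ Ω₁ : Set E2} {r R : ℝ} (G : Good Ω₀ Ω₁ r R) {t s : ℝ}
include G

lemma gmix_continuous (ht : t ∈ Icc (0:ℝ) 1) : Continuous (gaugeMix Ω₀ Ω₁ t) := by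
  have h0 : Continuous (gauge Ω₀) :=
    (G.m₀.2.2.2.1.lipschitzWith_gauge (r := ⟨r, G.hr.le⟩) (by exact_mod_cast G.hr)
      G.hb₀).continuous
  have h1 : Continuous (gauge Ω₁) :=
    (G.m₁.2.2.2.1.lipschitzWith_gauge (r := ⟨r, G.hr.le⟩) (by exact_mod_cast G.hr)
      G.hb₁).continuous
  exact ((continuous_const.mul h0).add (continuous_const.mul h1))

lemma memA_mixSet (ht : t ∈ Icc (0:ℝ) 1) : memA (mixSet Ω₀ Ω₁ t) := by
  refine ⟨⟨0, ?_⟩, ?_, ?_, ?_, ?_, ?_⟩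
  · show gaugeMix Ω₀ Ω₁ t 0 < 1
    unfold gaugeMix
    rw [gauge_zero, gauge_zero]
    norm_num
  · exact isOpen_lt (G.gmix_continuous ht) continuous_const
  · apply Bornology.IsBounded.subset (isBounded_ball (x := (0:E2)) (r := R))
    intro p hp
    have h1 := G.le_gmix ht p
    have h2 : gaugeMix Ω₀ Ω₁ t p < 1 := hp
    rw [mem_ball, dist_zero_right]
    have := div_lt_one G.hR |>.1 (lt_of_le_of_lt h1 h2)
    exact this
  · intro x hx y hy a b ha hb hab
    show gaugeMix Ω₀ Ω₁ t (a • x + b • y) < 1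
    calc gaugeMix Ω₀ Ω₁ t (a • x + b • y)
        ≤ gaugeMix Ω₀ Ω₁ t (a • x) + gaugeMix Ω₀ Ω₁ t (b • y) := G.gmix_add_le ht _ _
      _ = a * gaugeMix Ω₀ Ω₁ t x + b * gaugeMix Ω₀ Ω₁ t y := by
          rw [G.gmix_smul ht ha, G.gmix_smul ht hb]
      _ < 1 := by
          have hx' : gaugeMix Ω₀ Ω₁ t x < 1 := hx
          have hy' : gaugeMix Ω₀ Ω₁ t y < 1 := hy
          have h0x := G.gmix_nonneg ht x
          have h0y := G.gmix_nonneg ht y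
          rcases eq_or_lt_of_le ha with ha0 | ha0
          · have hb1 : b = 1 := by linarith
            have hax : a * gaugeMix Ω₀ Ω₁ t x = 0 := by rw [← ha0]; ring
            rw [hax, hb1]; linarith
          · have h1 : a * gaugeMix Ω₀ Ω₁ t x < a * 1 := by
              exact mul_lt_mul_of_pos_left hx' ha0
            have h2 : b * gaugeMix Ω₀ Ω₁ t y ≤ b * 1 := by
              exact mul_le_mul_of_nonneg_left hy'.le hb
            linarith
  · intro p
    show gaugeMix Ω₀ Ω₁ t p < 1 ↔ gaugeMix Ω₀ Ω₁ t _ < 1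
    unfold gaugeMix
    rw [gauge_reflect₁ G.m₀.2.2.2.2.1 p, gauge_reflect₁ G.m₁.2.2.2.2.1 p]
  · intro p
    show gaugeMix Ω₀ Ω₁ t p < 1 ↔ gaugeMix Ω₀ Ω₁ t _ < 1
    unfold gaugeMix
    rw [gauge_reflect₂ G.m₀.2.2.2.2.2 p, gauge_reflect₂ G.m₁.2.2.2.2.2 p]

lemma mixSet_zero : mixSet Ω₀ Ω₁ 0 = Ω₀ := by
  have : mixSet Ω₀ Ω₁ 0 = {p : E2 | gauge Ω₀ p < 1} := by
    unfold mixSet gaugeMix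
    ext p; simp
  rw [this]
  exact gauge_lt_one_eq_self_of_isOpen G.m₀.2.2.2.1 (memA_zero_mem G.m₀) G.m₀.2.1

lemma mixSet_one : mixSet Ω₀ Ω₁ 1 = Ω₁ := by
  have : mixSet Ω₀ Ω₁ 1 = {p : E2 | gauge Ω₁ p < 1} := by
    unfold mixSet gaugeMix
    ext p; simp
  rw [this]
  exact gauge_lt_one_eq_self_of_isOpen G.m₁.2.2.2.1 (memA_zero_mem G.m₁) G.m₁.2.1

lemma gmix_compare (hs : s ∈ Icc (0:ℝ) 1) (ht : t ∈ Icc (0:ℝ) 1) (p : E2) :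
    gaugeMix Ω₀ Ω₁ t p ≤ (1 + (R/r) * |s - t|) * gaugeMix Ω₀ Ω₁ s p := by
  have h0l := G.le_gauge₀ p
  have h1l := G.le_gauge₁ p
  have h0u := G.gauge_le₀ p
  have h1u := G.gauge_le₁ p
  have hsl := G.le_gmix hs p
  have key : gaugeMix Ω₀ Ω₁ t p - gaugeMix Ω₀ Ω₁ s p = (t - s) * (gauge Ω₁ p - gauge Ω₀ p) := by
    unfold gaugeMix; ring
  have habs : |gauge Ω₁ p - gauge Ω₀ p| ≤ ‖p‖ / r := by
    rw [abs_le]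
    constructor
    · have := gauge_nonneg (s := Ω₁) (x := p); linarith
    · have := gauge_nonneg (s := Ω₀) (x := p); linarith
  have hts : |t - s| = |s - t| := abs_sub_comm t s
  have hbound : gaugeMix Ω₀ Ω₁ t p - gaugeMix Ω₀ Ω₁ s p ≤ |s - t| * (‖p‖ / r) := by
    rw [key, ← hts]
    calc (t - s) * (gauge Ω₁ p - gauge Ω₀ p) ≤ |(t - s) * (gauge Ω₁ p - gauge Ω₀ p)| := le_abs_self _
      _ = |t - s| * |gauge Ω₁ p - gauge Ω₀ p| := abs_mul _ _
      _ ≤ |t - s| * (‖p‖ / r) := by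
          exact mul_le_mul_of_nonneg_left habs (abs_nonneg _)
  have hr0 : r ≠ 0 := G.hr.ne'
  have hR0 : R ≠ 0 := G.hR.ne'
  have hnorm : ‖p‖ / r = (R / r) * (‖p‖ / R) := by
    field_simp
  have hfinal : ‖p‖ / r ≤ (R / r) * gaugeMix Ω₀ Ω₁ s p := by
    rw [hnorm]
    exact mul_le_mul_of_nonneg_left hsl (div_nonneg G.hR.le G.hr.le)
  nlinarith [abs_nonneg (s - t), mul_le_mul_of_nonneg_left hfinal (abs_nonneg (s - t))]

lemma mixSet_subset_smul (hs : s ∈ Icc (0:ℝ) 1) (ht : t ∈ Icc (0:ℝ) 1) :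
    mixSet Ω₀ Ω₁ t ⊆ (1 + (R/r) * |s - t|) • mixSet Ω₀ Ω₁ s := by
  set c := 1 + (R/r) * |s - t| with hc
  have hc1 : 1 ≤ c := by
    have h := mul_nonneg (div_nonneg G.hR.le G.hr.le) (abs_nonneg (s - t))
    rw [hc]
    linarith
  have hc0 : 0 < c := lt_of_lt_of_le one_pos hc1
  intro p hp
  rw [Set.mem_smul_set_iff_inv_smul_mem₀ hc0.ne']
  show gaugeMix Ω₀ Ω₁ s (c⁻¹ • p) < 1
  rw [G.gmix_smul hs (inv_nonneg.2 hc0.le)]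
  have h1 : gaugeMix Ω₀ Ω₁ s p ≤ c * gaugeMix Ω₀ Ω₁ t p := by
    have := G.gmix_compare ht hs p
    rwa [abs_sub_comm t s] at this
  have h2 : gaugeMix Ω₀ Ω₁ t p < 1 := hp
  have h3 : gaugeMix Ω₀ Ω₁ s p < c := by nlinarith [G.gmix_nonneg ht p]
  rw [inv_mul_lt_iff₀ hc0, mul_one]
  exact h3

end Good

lemma E2_finrank : Module.finrank ℝ E2 = 2 := finrank_euclideanSpace_fin

lemma frontier_smul₀ {c : ℝ} (hc : c ≠ 0) (S : Set E2) :
    frontier (c • S) = c • frontier S := by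
  unfold frontier
  rw [closure_smul₀' hc, interior_smul₀ hc]
  exact (Set.image_diff (smul_right_injective E2 hc) _ _).symm

lemma volume_smul_E2 {c : ℝ} (hc : 0 ≤ c) (S : Set E2) :
    volume (c • S) = ENNReal.ofReal (c ^ 2) * volume S := by
  rw [Measure.addHaar_smul, E2_finrank, abs_of_nonneg (pow_nonneg hc 2)]

lemma hausdorff_frontier_smul {c : ℝ} (hc : 0 < c) (S : Set E2) :
    μH[1] (frontier (c • S)) = ENNReal.ofReal c * μH[1] (frontier S) := by
  rw [frontier_smul₀ hc.ne' S,
    MeasureTheory.Measure.hausdorffMeasure_smul₀ (zero_le_one) hc.ne' (frontier S)]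
  rw [NNReal.rpow_one, ENNReal.smul_def, smul_eq_mul]
  congr 1
  rw [← enorm_eq_nnnorm, ← ofReal_norm, Real.norm_eq_abs, abs_of_pos hc]

lemma integrableOn_normSq {S : Set E2} (hb : Bornology.IsBounded S) (hm : MeasurableSet S) :
    IntegrableOn (fun p : E2 => ‖p‖ ^ 2) S volume := by
  obtain ⟨M, hM⟩ := hb.subset_ball (0 : E2)
  refine MeasureTheory.Measure.integrableOn_of_bounded (M := M ^ 2) hb.measure_lt_top.ne
    ((continuous_norm.pow 2).aestronglyMeasurable) ?_
  · rw [ae_restrict_iff' hm]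
    filter_upwards with p hp
    have : ‖p‖ < M := by
      have := hM hp; rwa [mem_ball, dist_zero_right] at this
    have h0 : (0:ℝ) ≤ ‖p‖ := norm_nonneg _
    rw [Real.norm_eq_abs, abs_of_nonneg (by positivity)]
    nlinarith

lemma inertia_smul {c : ℝ} (hc : 0 < c) (S : Set E2) :
    inertia (c • S) = c ^ 4 * inertia S := by
  unfold inertia
  have key := MeasureTheory.Measure.setIntegral_comp_smul_of_pos volume
    (fun p : E2 => ‖p‖ ^ 2) S hc
  rw [E2_finrank] at key
  have lhs_eq : ∫ x in S, ‖c • x‖ ^ 2 = c ^ 2 * ∫ x in S, ‖x‖ ^ 2 := by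
    rw [← MeasureTheory.integral_const_mul]
    congr 1
    funext x
    rw [norm_smul, Real.norm_eq_abs, abs_of_pos hc]
    ring
  rw [lhs_eq, smul_eq_mul] at key
  have hc2 : (c ^ 2 : ℝ) ≠ 0 := by positivity
  have h4 : ∫ x in c • S, ‖x‖ ^ 2 = c ^ 2 * (c ^ 2 * ∫ x in S, ‖x‖ ^ 2) := by
    rw [key]
    field_simp
  rw [h4]
  ring

namespace Good

variable {Ω₀ Ω₁ : Set E2} {r R : ℝ} (G : Good Ω₀ Ω₁ r R) {t s : ℝ}
include G

lemma mix_subset_ball (ht : t ∈ Icc (0:ℝ) 1) : mixSet Ω₀ Ω₁ t ⊆ ball (0:E2) R := by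
  intro p hp
  have h1 := G.le_gmix ht p
  have h2 : gaugeMix Ω₀ Ω₁ t p < 1 := hp
  rw [mem_ball, dist_zero_right]
  exact (div_lt_one G.hR).1 (lt_of_le_of_lt h1 h2)

lemma ball_subset_mix (ht : t ∈ Icc (0:ℝ) 1) : ball (0:E2) r ⊆ mixSet Ω₀ Ω₁ t := by
  intro p hp
  rw [mem_ball, dist_zero_right] at hp
  have h1 := G.gmix_le ht p
  show gaugeMix Ω₀ Ω₁ t p < 1
  calc gaugeMix Ω₀ Ω₁ t p ≤ ‖p‖ / r := h1
    _ < 1 := (div_lt_one G.hr).2 hp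

lemma mix_isBounded (ht : t ∈ Icc (0:ℝ) 1) : Bornology.IsBounded (mixSet Ω₀ Ω₁ t) :=
  (isBounded_ball).subset (G.mix_subset_ball ht)

lemma mix_measurable (ht : t ∈ Icc (0:ℝ) 1) : MeasurableSet (mixSet Ω₀ Ω₁ t) :=
  (G.memA_mixSet ht).2.1.measurableSet

lemma mix_vol_ne_top (ht : t ∈ Icc (0:ℝ) 1) : volume (mixSet Ω₀ Ω₁ t) ≠ ⊤ :=
  ((G.mix_isBounded ht).measure_lt_top).ne

lemma area_mix_le (ht : t ∈ Icc (0:ℝ) 1) :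
    area (mixSet Ω₀ Ω₁ t) ≤ (volume (ball (0:E2) R)).toReal := by
  apply ENNReal.toReal_mono (show volume (ball (0:E2) R) < ⊤ from measure_ball_lt_top).ne
  exact measure_mono (G.mix_subset_ball ht)

lemma area_mix_pos (ht : t ∈ Icc (0:ℝ) 1) : 0 < area (mixSet Ω₀ Ω₁ t) := by
  apply ENNReal.toReal_pos _ (G.mix_vol_ne_top ht)
  have := measure_ball_pos volume (0:E2) G.hr
  have hmono := measure_mono (μ := (volume : Measure E2)) (G.ball_subset_mix ht)
  exact (lt_of_lt_of_le this hmono).ne'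

lemma area_nonneg' (S : Set E2) : 0 ≤ area S := ENNReal.toReal_nonneg

lemma area_mix_est (hs : s ∈ Icc (0:ℝ) 1) (ht : t ∈ Icc (0:ℝ) 1) :
    area (mixSet Ω₀ Ω₁ s) ≤ (1 + (R/r) * |s - t|) ^ 2 * area (mixSet Ω₀ Ω₁ t) := by
  set c := 1 + (R/r) * |s - t| with hc
  have hc1 : 1 ≤ c := by
    have h := mul_nonneg (div_nonneg G.hR.le G.hr.le) (abs_nonneg (s - t))
    rw [hc]; linarith
  have hc0 : 0 < c := lt_of_lt_of_le one_pos hc1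
  have hsub : mixSet Ω₀ Ω₁ s ⊆ c • mixSet Ω₀ Ω₁ t := by
    have := G.mixSet_subset_smul ht hs
    rwa [abs_sub_comm t s] at this
  have h1 : volume (mixSet Ω₀ Ω₁ s) ≤ ENNReal.ofReal (c ^ 2) * volume (mixSet Ω₀ Ω₁ t) := by
    calc volume (mixSet Ω₀ Ω₁ s) ≤ volume (c • mixSet Ω₀ Ω₁ t) := measure_mono hsub
      _ = ENNReal.ofReal (c ^ 2) * volume (mixSet Ω₀ Ω₁ t) := volume_smul_E2 hc0.le _
  have hne : ENNReal.ofReal (c ^ 2) * volume (mixSet Ω₀ Ω₁ t) ≠ ⊤ :=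
    ENNReal.mul_ne_top ENNReal.ofReal_ne_top (G.mix_vol_ne_top ht)
  have := ENNReal.toReal_mono hne h1
  rwa [ENNReal.toReal_mul, ENNReal.toReal_ofReal (by positivity)] at this

lemma inertia_mix_nonneg (ht : t ∈ Icc (0:ℝ) 1) : 0 ≤ inertia (mixSet Ω₀ Ω₁ t) := by
  apply MeasureTheory.setIntegral_nonneg (G.mix_measurable ht)
  intro p _
  positivity

lemma inertia_mix_le (ht : t ∈ Icc (0:ℝ) 1) :
    inertia (mixSet Ω₀ Ω₁ t) ≤ R ^ 2 * (volume (ball (0:E2) R)).toReal := by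
  have h1 : inertia (mixSet Ω₀ Ω₁ t) ≤ ∫ p in ball (0:E2) R, ‖p‖ ^ 2 := by
    apply MeasureTheory.setIntegral_mono_set
    · exact integrableOn_normSq isBounded_ball measurableSet_ball
    · filter_upwards with p; positivity
    · exact (G.mix_subset_ball ht).eventuallyLE
  have h2 : ∫ p in ball (0:E2) R, ‖p‖ ^ 2 ≤ R ^ 2 * (volume (ball (0:E2) R)).toReal := by
    have hbd : ∀ p ∈ ball (0:E2) R, ‖(fun q : E2 => ‖q‖ ^ 2) p‖ ≤ R ^ 2 := by
      intro p hp
      rw [mem_ball, dist_zero_right] at hp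
      show ‖‖p‖ ^ 2‖ ≤ R ^ 2
      rw [Real.norm_eq_abs, abs_of_nonneg (by positivity)]
      nlinarith [norm_nonneg p]
    have hb := norm_setIntegral_le_of_norm_le_const (μ := volume)
      (f := fun p : E2 => ‖p‖ ^ 2) measure_ball_lt_top hbd
    calc ∫ p in ball (0:E2) R, ‖p‖ ^ 2 ≤ |∫ p in ball (0:E2) R, ‖p‖ ^ 2| := le_abs_self _
      _ = ‖∫ p in ball (0:E2) R, ‖p‖ ^ 2‖ := (Real.norm_eq_abs _).symm
      _ ≤ R ^ 2 * (volume (ball (0:E2) R)).toReal := hb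
  linarith

lemma inertia_mix_pos (ht : t ∈ Icc (0:ℝ) 1) : 0 < inertia (mixSet Ω₀ Ω₁ t) := by
  unfold inertia
  rw [MeasureTheory.setIntegral_pos_iff_support_of_nonneg_ae]
  · have hsupp : (Function.support fun p : E2 => ‖p‖ ^ 2) = {(0:E2)}ᶜ := by
      ext p
      simp [Function.mem_support, norm_eq_zero]
    rw [hsupp]
    have h1 : volume ((({(0:E2)}ᶜ : Set E2)) ∩ mixSet Ω₀ Ω₁ t)
        = volume (mixSet Ω₀ Ω₁ t \ {(0:E2)}) := by
      congr 1
      ext p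
      simp [and_comm]
    rw [h1, measure_diff_null (measure_singleton _)]
    have := measure_ball_pos volume (0:E2) G.hr
    exact lt_of_lt_of_le this (measure_mono (G.ball_subset_mix ht))
  · filter_upwards with p; positivity
  · exact integrableOn_normSq (G.mix_isBounded ht) (G.mix_measurable ht)

lemma inertia_mix_est (hs : s ∈ Icc (0:ℝ) 1) (ht : t ∈ Icc (0:ℝ) 1) :
    inertia (mixSet Ω₀ Ω₁ s) ≤ (1 + (R/r) * |s - t|) ^ 4 * inertia (mixSet Ω₀ Ω₁ t) := by
  set c := 1 + (R/r) * |s - t| with hc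
  have hc1 : 1 ≤ c := by
    have h := mul_nonneg (div_nonneg G.hR.le G.hr.le) (abs_nonneg (s - t))
    rw [hc]; linarith
  have hc0 : 0 < c := lt_of_lt_of_le one_pos hc1
  have hsub : mixSet Ω₀ Ω₁ s ⊆ c • mixSet Ω₀ Ω₁ t := by
    have := G.mixSet_subset_smul ht hs
    rwa [abs_sub_comm t s] at this
  have hmono : inertia (mixSet Ω₀ Ω₁ s) ≤ inertia (c • mixSet Ω₀ Ω₁ t) := by
    unfold inertia
    apply MeasureTheory.setIntegral_mono_set
    · exact integrableOn_normSq ((G.mix_isBounded ht).smul₀ c)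
        ((G.memA_mixSet ht).2.1.smul₀ hc0.ne').measurableSet
    · filter_upwards with p; positivity
    · exact hsub.eventuallyLE
  calc inertia (mixSet Ω₀ Ω₁ s) ≤ inertia (c • mixSet Ω₀ Ω₁ t) := hmono
    _ = c ^ 4 * inertia (mixSet Ω₀ Ω₁ t) := inertia_smul hc0 _

lemma perimENN_est (hs : s ∈ Icc (0:ℝ) 1) (ht : t ∈ Icc (0:ℝ) 1) :
    μH[1] (frontier (mixSet Ω₀ Ω₁ s))
      ≤ ENNReal.ofReal (1 + (R/r) * |s - t|) * μH[1] (frontier (mixSet Ω₀ Ω₁ t)) := by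
  set c := 1 + (R/r) * |s - t| with hc
  have hc1 : 1 ≤ c := by
    have h := mul_nonneg (div_nonneg G.hR.le G.hr.le) (abs_nonneg (s - t))
    rw [hc]; linarith
  have hc0 : 0 < c := lt_of_lt_of_le one_pos hc1
  have hsub : mixSet Ω₀ Ω₁ s ⊆ c • mixSet Ω₀ Ω₁ t := by
    have := G.mixSet_subset_smul ht hs
    rwa [abs_sub_comm t s] at this
  have hA := G.memA_mixSet hs
  have hB := G.memA_mixSet ht
  have hmono : μH[1] (frontier (mixSet Ω₀ Ω₁ s)) ≤ μH[1] (frontier (c • mixSet Ω₀ Ω₁ t)) := by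
    apply frontier_hausdorff_mono hA.2.2.2.1 hA.2.1 hA.1 (hB.2.1.smul₀ hc0.ne')
      ((G.mix_isBounded ht).smul₀ c) hsub
  calc μH[1] (frontier (mixSet Ω₀ Ω₁ s)) ≤ μH[1] (frontier (c • mixSet Ω₀ Ω₁ t)) := hmono
    _ = ENNReal.ofReal c * μH[1] (frontier (mixSet Ω₀ Ω₁ t)) := hausdorff_frontier_smul hc0 _

end Good

lemma est_helper2 {x y C δ Am : ℝ} (h : x ≤ (1 + C*δ)^2 * y) (hy : y ≤ Am) (hy0 : 0 ≤ y)
    (hC : 1 ≤ C) (hδ0 : 0 ≤ δ) (hδ1 : δ ≤ 1) (hAm : 0 ≤ Am) : x - y ≤ 3*C^2*Am*δ := by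
  have h1 : (1 + C*δ)^2 * y - y = (2*C + C^2*δ)*δ*y := by ring
  have h2 : 2*C + C^2*δ ≤ 3*C^2 := by nlinarith
  have hδy : 0 ≤ δ*y := mul_nonneg hδ0 hy0
  have h3 : (2*C + C^2*δ)*δ*y ≤ 3*C^2*(δ*y) := by nlinarith
  have h4 : 3*C^2*(δ*y) ≤ 3*C^2*(δ*Am) := by
    have h5 : δ*y ≤ δ*Am := mul_le_mul_of_nonneg_left hy hδ0
    nlinarith [sq_nonneg C]
  nlinarith

lemma est_helper4 {x y C δ W : ℝ} (h : x ≤ (1 + C*δ)^4 * y) (hy : y ≤ W) (hy0 : 0 ≤ y)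
    (hC : 1 ≤ C) (hδ0 : 0 ≤ δ) (hδ1 : δ ≤ 1) (hW : 0 ≤ W) : x - y ≤ 15*C^4*W*δ := by
  have hC0 : (0:ℝ) < C := lt_of_lt_of_le one_pos hC
  have h1 : (1 + C*δ)^4 * y - y = (4*C + 6*C^2*δ + 4*C^3*δ^2 + C^4*δ^3)*δ*y := by ring
  have g2 : 1 ≤ C^2 := by nlinarith
  have g3 : 1 ≤ C^3 := by nlinarith
  have e1 : C ≤ C^4 := by nlinarith [mul_le_mul_of_nonneg_left g3 hC0.le]
  have e2 : C^2 ≤ C^4 := by nlinarith [mul_le_mul_of_nonneg_left g2 (sq_nonneg C)]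
  have e3 : C^3 ≤ C^4 := by nlinarith [mul_le_mul_of_nonneg_left hC (pow_nonneg hC0.le 3)]
  have hd2 : δ^2 ≤ 1 := by nlinarith
  have hd3 : δ^3 ≤ 1 := by nlinarith [mul_nonneg (mul_nonneg hδ0 hδ0) hδ0]
  have f1 : 6*C^2*δ ≤ 6*C^2 := by nlinarith [sq_nonneg C]
  have f2 : 4*C^3*δ^2 ≤ 4*C^3 := by nlinarith [mul_le_mul_of_nonneg_left hd2 (by positivity : (0:ℝ) ≤ 4*C^3)]
  have f3 : C^4*δ^3 ≤ C^4 := by nlinarith [mul_le_mul_of_nonneg_left hd3 (by positivity : (0:ℝ) ≤ C^4)]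
  have h2 : 4*C + 6*C^2*δ + 4*C^3*δ^2 + C^4*δ^3 ≤ 15*C^4 := by linarith
  have hδy : 0 ≤ δ*y := mul_nonneg hδ0 hy0
  have h3 : (4*C + 6*C^2*δ + 4*C^3*δ^2 + C^4*δ^3)*δ*y ≤ 15*C^4*(δ*y) := by
    calc (4*C + 6*C^2*δ + 4*C^3*δ^2 + C^4*δ^3)*δ*y
        = (4*C + 6*C^2*δ + 4*C^3*δ^2 + C^4*δ^3)*(δ*y) := by ring
      _ ≤ 15*C^4*(δ*y) := mul_le_mul_of_nonneg_right h2 hδy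
  have h4 : 15*C^4*(δ*y) ≤ 15*C^4*(δ*W) := by
    have h40 : (0:ℝ) ≤ 15*C^4 := by positivity
    exact mul_le_mul_of_nonneg_left (mul_le_mul_of_nonneg_left hy hδ0) h40
  have h5 : 15*C^4*(δ*W) = 15*C^4*W*δ := by ring
  linarith

lemma est_helper1 {x y C δ P : ℝ} (h : x ≤ (1 + C*δ)*y) (hy : y ≤ P) (hy0 : 0 ≤ y)
    (hC : 1 ≤ C) (hδ0 : 0 ≤ δ) (hP : 0 ≤ P) : x - y ≤ C*P*δ := by
  have h1 : (1 + C*δ)*y - y = C*δ*y := by ring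
  have h2 : C*δ*y ≤ C*δ*P := by
    apply mul_le_mul_of_nonneg_left hy
    exact mul_nonneg (by linarith) hδ0
  nlinarith

lemma continuousOn_of_lipbound {f : ℝ → ℝ} {L : ℝ}
    (h : ∀ s ∈ Icc (0:ℝ) 1, ∀ t ∈ Icc (0:ℝ) 1, |f s - f t| ≤ L * |s - t|) :
    ContinuousOn f (Icc 0 1) := by
  intro x hx
  rw [Metric.continuousWithinAt_iff]
  intro ε hε
  refine ⟨ε / (|L| + 1), by positivity, fun {y} hy hyd => ?_⟩
  rw [Real.dist_eq] at hyd ⊢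
  have h1 := h y hy x hx
  have h2 : L * |y - x| ≤ |L| * |y - x| :=
    mul_le_mul_of_nonneg_right (le_abs_self L) (abs_nonneg _)
  have hl1 : (0:ℝ) < |L| + 1 := by positivity
  have h3 : |L| * |y - x| < (|L| + 1) * (ε / (|L| + 1)) := by
    nlinarith [abs_nonneg (y - x), abs_nonneg L]
  have h4 : (|L| + 1) * (ε / (|L| + 1)) = ε := by field_simp
  linarith

namespace Good

variable {Ω₀ Ω₁ : Set E2} {r R : ℝ} (G : Good Ω₀ Ω₁ r R)
include G

lemma hC1 : 1 ≤ R / r := (one_le_div G.hr).2 G.hrR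

lemma cont_area : ContinuousOn (fun u => area (mixSet Ω₀ Ω₁ u)) (Icc 0 1) := by
  have hAm0 : (0:ℝ) ≤ (volume (ball (0:E2) R)).toReal := ENNReal.toReal_nonneg
  apply continuousOn_of_lipbound (L := 3*(R/r)^2*(volume (ball (0:E2) R)).toReal)
  intro s hs t ht
  have hδ1 : |s - t| ≤ 1 := by
    rw [abs_le]; constructor <;> [linarith [hs.1, ht.2]; linarith [hs.2, ht.1]]
  have hδ0 : (0:ℝ) ≤ |s - t| := abs_nonneg _
  have e1 := G.area_mix_est hs ht
  have e2 := G.area_mix_est ht hs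
  rw [abs_sub_comm t s] at e2
  have hb1 := G.area_mix_le ht
  have hb2 := G.area_mix_le hs
  have hn1 : (0:ℝ) ≤ area (mixSet Ω₀ Ω₁ t) := ENNReal.toReal_nonneg
  have hn2 : (0:ℝ) ≤ area (mixSet Ω₀ Ω₁ s) := ENNReal.toReal_nonneg
  rw [abs_le]
  constructor
  · have := est_helper2 e2 hb2 hn2 G.hC1 hδ0 hδ1 hAm0
    linarith
  · have := est_helper2 e1 hb1 hn1 G.hC1 hδ0 hδ1 hAm0
    linarith

lemma cont_inertia : ContinuousOn (fun u => inertia (mixSet Ω₀ Ω₁ u)) (Icc 0 1) := by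
  have hWm0 : (0:ℝ) ≤ R ^ 2 * (volume (ball (0:E2) R)).toReal := by positivity
  apply continuousOn_of_lipbound (L := 15*(R/r)^4*(R ^ 2 * (volume (ball (0:E2) R)).toReal))
  intro s hs t ht
  have hδ1 : |s - t| ≤ 1 := by
    rw [abs_le]; constructor <;> [linarith [hs.1, ht.2]; linarith [hs.2, ht.1]]
  have hδ0 : (0:ℝ) ≤ |s - t| := abs_nonneg _
  have e1 := G.inertia_mix_est hs ht
  have e2 := G.inertia_mix_est ht hs
  rw [abs_sub_comm t s] at e2
  have hb1 := G.inertia_mix_le ht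
  have hb2 := G.inertia_mix_le hs
  have hn1 := G.inertia_mix_nonneg ht
  have hn2 := G.inertia_mix_nonneg hs
  rw [abs_le]
  constructor
  · have := est_helper4 e2 hb2 hn2 G.hC1 hδ0 hδ1 hWm0
    linarith
  · have := est_helper4 e1 hb1 hn1 G.hC1 hδ0 hδ1 hWm0
    linarith

lemma perim_est_real {s t : ℝ} (hs : s ∈ Icc (0:ℝ) 1) (ht : t ∈ Icc (0:ℝ) 1)
    (hfin : μH[1] (frontier (mixSet Ω₀ Ω₁ t)) ≠ ⊤) :
    perim (mixSet Ω₀ Ω₁ s) ≤ (1 + (R/r) * |s - t|) * perim (mixSet Ω₀ Ω₁ t) := by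
  have h1 := G.perimENN_est hs ht
  have hne : ENNReal.ofReal (1 + (R/r) * |s - t|) * μH[1] (frontier (mixSet Ω₀ Ω₁ t)) ≠ ⊤ :=
    ENNReal.mul_ne_top ENNReal.ofReal_ne_top hfin
  have h2 := ENNReal.toReal_mono hne h1
  have hc0 : (0:ℝ) ≤ 1 + (R/r) * |s - t| := by
    have := mul_nonneg (div_nonneg G.hR.le G.hr.le) (abs_nonneg (s - t))
    linarith
  rwa [ENNReal.toReal_mul, ENNReal.toReal_ofReal hc0] at h2

lemma perim_ne_top_all {t : ℝ} (ht : t ∈ Icc (0:ℝ) 1)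
    (hfin : μH[1] (frontier (mixSet Ω₀ Ω₁ 0)) ≠ ⊤) :
    μH[1] (frontier (mixSet Ω₀ Ω₁ t)) ≠ ⊤ := by
  intro htop
  have h1 := G.perimENN_est ht (by constructor <;> norm_num : (0:ℝ) ∈ Icc (0:ℝ) 1)
  have hlt : μH[1] (frontier (mixSet Ω₀ Ω₁ t)) < ⊤ :=
    h1.trans_lt (ENNReal.mul_lt_top ENNReal.ofReal_lt_top hfin.lt_top)
  exact absurd htop hlt.ne

end Good

namespace Good

variable {Ω₀ Ω₁ : Set E2} {r R : ℝ} (G : Good Ω₀ Ω₁ r R)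
include G

lemma zero_mem_Icc : (0:ℝ) ∈ Icc (0:ℝ) 1 := by constructor <;> norm_num

lemma hm_top_all (hinf : μH[1] (frontier (mixSet Ω₀ Ω₁ 0)) = ⊤) {t : ℝ}
    (ht : t ∈ Icc (0:ℝ) 1) : μH[1] (frontier (mixSet Ω₀ Ω₁ t)) = ⊤ := by
  by_contra hne
  have h1 := G.perimENN_est G.zero_mem_Icc ht
  rw [hinf] at h1
  have h2 := h1.trans_lt (ENNReal.mul_lt_top ENNReal.ofReal_lt_top
    (lt_top_iff_ne_top.2 hne))
  exact absurd h2 (by simp)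

lemma perim_bound (hfin : μH[1] (frontier (mixSet Ω₀ Ω₁ 0)) ≠ ⊤) {t : ℝ}
    (ht : t ∈ Icc (0:ℝ) 1) :
    perim (mixSet Ω₀ Ω₁ t) ≤ (1 + R/r) * perim (mixSet Ω₀ Ω₁ 0) := by
  have h1 := G.perim_est_real ht G.zero_mem_Icc hfin
  have hC0 : (0:ℝ) ≤ R/r := div_nonneg G.hR.le G.hr.le
  have hδ : |t - 0| ≤ 1 := by
    rw [abs_le]; constructor <;> [linarith [ht.1]; linarith [ht.2]]
  have hp0 : (0:ℝ) ≤ perim (mixSet Ω₀ Ω₁ 0) := ENNReal.toReal_nonneg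
  have hδ0 : (0:ℝ) ≤ |t - 0| := abs_nonneg _
  calc perim (mixSet Ω₀ Ω₁ t) ≤ (1 + (R/r) * |t - 0|) * perim (mixSet Ω₀ Ω₁ 0) := h1
    _ ≤ (1 + R/r) * perim (mixSet Ω₀ Ω₁ 0) := by
        nlinarith [mul_nonneg (mul_nonneg hC0 (by linarith : (0:ℝ) ≤ 1 - |t - 0|)) hp0]

lemma cont_perim (hfin : μH[1] (frontier (mixSet Ω₀ Ω₁ 0)) ≠ ⊤) :
    ContinuousOn (fun u => perim (mixSet Ω₀ Ω₁ u)) (Icc 0 1) := by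
  apply continuousOn_of_lipbound
    (L := (R/r) * ((1 + R/r) * perim (mixSet Ω₀ Ω₁ 0)))
  intro s hs t ht
  have hδ0 : (0:ℝ) ≤ |s - t| := abs_nonneg _
  have hP0 : (0:ℝ) ≤ (1 + R/r) * perim (mixSet Ω₀ Ω₁ 0) := by
    have hC0 : (0:ℝ) ≤ R/r := div_nonneg G.hR.le G.hr.le
    have : (0:ℝ) ≤ perim (mixSet Ω₀ Ω₁ 0) := ENNReal.toReal_nonneg
    nlinarith
  have e1 := G.perim_est_real hs ht (G.perim_ne_top_all ht hfin)
  have e2 := G.perim_est_real ht hs (G.perim_ne_top_all hs hfin)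
  rw [abs_sub_comm t s] at e2
  have hb1 := G.perim_bound hfin ht
  have hb2 := G.perim_bound hfin hs
  have hn1 : (0:ℝ) ≤ perim (mixSet Ω₀ Ω₁ t) := ENNReal.toReal_nonneg
  have hn2 : (0:ℝ) ≤ perim (mixSet Ω₀ Ω₁ s) := ENNReal.toReal_nonneg
  rw [abs_le]
  constructor
  · have := est_helper1 e2 hb2 hn2 G.hC1 hδ0 hP0
    linarith
  · have := est_helper1 e1 hb1 hn1 G.hC1 hδ0 hP0
    linarith

lemma perim_zero_all (hfin : μH[1] (frontier (mixSet Ω₀ Ω₁ 0)) ≠ ⊤)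
    (hz : perim (mixSet Ω₀ Ω₁ 0) = 0) {t : ℝ} (ht : t ∈ Icc (0:ℝ) 1) :
    perim (mixSet Ω₀ Ω₁ t) = 0 := by
  have h1 := G.perim_est_real ht G.zero_mem_Icc hfin
  rw [hz, mul_zero] at h1
  exact le_antisymm h1 ENNReal.toReal_nonneg

lemma perim_pos_all (hfin : μH[1] (frontier (mixSet Ω₀ Ω₁ 0)) ≠ ⊤)
    (hp : 0 < perim (mixSet Ω₀ Ω₁ 0)) {t : ℝ} (ht : t ∈ Icc (0:ℝ) 1) :
    0 < perim (mixSet Ω₀ Ω₁ t) := by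
  have h1 := G.perim_est_real G.zero_mem_Icc ht (G.perim_ne_top_all ht hfin)
  have hC0 : (0:ℝ) ≤ R/r := div_nonneg G.hR.le G.hr.le
  have hδ0 : (0:ℝ) ≤ |0 - t| := abs_nonneg _
  by_contra hle
  push_neg at hle
  have hzero : perim (mixSet Ω₀ Ω₁ t) = 0 := le_antisymm hle ENNReal.toReal_nonneg
  rw [hzero, mul_zero] at h1
  linarith

lemma cont_xF : ContinuousOn (fun u => xF (mixSet Ω₀ Ω₁ u)) (Icc 0 1) := by
  unfold xF
  apply ContinuousOn.div
  · exact G.cont_area.pow 2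
  · exact continuousOn_const.mul G.cont_inertia
  · intro t ht
    have := G.inertia_mix_pos ht
    have hpi := Real.pi_pos
    exact (mul_pos (by linarith) this).ne'

lemma cont_yF : ContinuousOn (fun u => yF (mixSet Ω₀ Ω₁ u)) (Icc 0 1) := by
  by_cases hfin : μH[1] (frontier (mixSet Ω₀ Ω₁ 0)) = ⊤
  · have heq : EqOn (fun u => yF (mixSet Ω₀ Ω₁ u)) (fun _ => (0:ℝ)) (Icc 0 1) := by
      intro t ht
      have htop := G.hm_top_all hfin ht
      show yF (mixSet Ω₀ Ω₁ t) = 0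
      unfold yF perim
      rw [htop]
      simp
    exact continuousOn_const.congr heq
  · by_cases hz : perim (mixSet Ω₀ Ω₁ 0) = 0
    · have heq : EqOn (fun u => yF (mixSet Ω₀ Ω₁ u)) (fun _ => (0:ℝ)) (Icc 0 1) := by
        intro t ht
        have h0 := G.perim_zero_all hfin hz ht
        show yF (mixSet Ω₀ Ω₁ t) = 0
        unfold yF
        rw [h0]
        simp
      exact continuousOn_const.congr heq
    · have hp : 0 < perim (mixSet Ω₀ Ω₁ 0) :=
        lt_of_le_of_ne ENNReal.toReal_nonneg (Ne.symm hz)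
      unfold yF
      apply ContinuousOn.div
      · exact continuousOn_const.mul G.cont_area
      · exact (G.cont_perim hfin).pow 2
      · intro t ht
        exact (pow_ne_zero 2 (G.perim_pos_all hfin hp ht).ne')

end Good

/-- the diagram 𝒟 is path-connected. -/
theorem stmt3 (Q₀ Q₁ : ℝ × ℝ) (h₀ : Q₀ ∈ diag) (h₁ : Q₁ ∈ diag) :
    ∃ γ : ℝ → ℝ × ℝ, ContinuousOn γ (Set.Icc 0 1) ∧ γ 0 = Q₀ ∧ γ 1 = Q₁ ∧
      ∀ t ∈ Set.Icc (0 : ℝ) 1, γ t ∈ diag := by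
  obtain ⟨Ω₀, hm0, hq0⟩ := h₀
  obtain ⟨Ω₁, hm1, hq1⟩ := h₁
  obtain ⟨r, R, G⟩ := good_exists hm0 hm1
  refine ⟨fun t => (xF (mixSet Ω₀ Ω₁ t), yF (mixSet Ω₀ Ω₁ t)), ?_, ?_, ?_, ?_⟩
  · exact G.cont_xF.prodMk G.cont_yF
  · show (xF (mixSet Ω₀ Ω₁ 0), yF (mixSet Ω₀ Ω₁ 0)) = Q₀
    rw [G.mixSet_zero]
    exact hq0.symm
  · show (xF (mixSet Ω₀ Ω₁ 1), yF (mixSet Ω₀ Ω₁ 1)) = Q₁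
    rw [G.mixSet_one]
    exact hq1.symm
  · intro t ht
    exact ⟨mixSet Ω₀ Ω₁ t, G.memA_mixSet ht, rfl⟩
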